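/- Let V be a real inner product space with orthonormal family {s_μ} indexed by partitions μ of N (ordered by dominance). Suppose for each generator vector v_B (indexed by B with associated partition φ(B)) we have ⟨s_μ, v_B⟩ = 0 unless μ ⊵ φ(B), and ⟨s_{φ(B)}, v_B⟩ = 1, and all ⟨s_μ, v_B⟩ ≥ 0. Fix A with φ(A) = λ. If there exists f supported on partitions ⊵ λ with ⟨f, v_A⟩ > 0 and ⟨f, v_B⟩ ≤ 0 for all B ≠ A with φ(B) ⊵ λ, then there exists g with ⟨g, v_A⟩ > 0 and ⟨g, v_B⟩ ≤ 0 for all B ≠ A (with no restriction on φ(B)). -/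

import Mathlib

open scoped RealInnerProductSpace

/-- Dominance order on partitions of `n`: `Dominates μ ν` means `μ ⊵ ν`. -/
def Dominates {n : ℕ} (μ ν : n.Partition) : Prop :=
  ∀ i : ℕ, ((ν.parts.sort (· ≥ ·)).take i).sum ≤ ((μ.parts.sort (· ≥ ·)).take i).sum

lemma Dominates.refl {n : ℕ} (μ : n.Partition) : Dominates μ μ := fun _ => le_rfl

lemma Dominates.trans {n : ℕ} {μ ν κ : n.Partition} (h1 : Dominates μ ν)
    (h2 : Dominates ν κ) : Dominates μ κ := fun i => (h2 i).trans (h1 i)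

lemma list_eq_of_take_sum : ∀ (l1 l2 : List ℕ), 0 ∉ l1 → 0 ∉ l2 →
    (∀ i, (l1.take i).sum = (l2.take i).sum) → l1 = l2 := by
  intro l1
  induction l1 with
  | nil =>
    intro l2 _ h2 h
    cases l2 with
    | nil => rfl
    | cons b t =>
      exfalso
      have := h 1
      simp at this
      exact h2 (by simp [← this])
  | cons a t1 ih =>
    intro l2 h1 h2 h
    cases l2 with
    | nil =>
      exfalso
      have := h 1
      simp at this
      exact h1 (by simp [this])
    | cons b t2 =>
      have hab : a = b := by have := h 1; simpa using this
      have ht : t1 = t2 := by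
        refine ih t2 (fun hx => h1 (List.mem_cons_of_mem _ hx))
          (fun hx => h2 (List.mem_cons_of_mem _ hx)) (fun i => ?_)
        have := h (i + 1)
        simp [hab] at this
        exact this
      rw [hab, ht]

lemma Dominates.antisymm {n : ℕ} {μ ν : n.Partition} (h1 : Dominates μ ν)
    (h2 : Dominates ν μ) : μ = ν := by
  have hl : (μ.parts.sort (· ≥ ·)) = (ν.parts.sort (· ≥ ·)) := by
    refine list_eq_of_take_sum _ _ ?_ ?_ (fun i => le_antisymm (h2 i) (h1 i))
    · intro h0
      exact absurd (μ.parts_pos (Multiset.mem_sort (· ≥ ·) |>.mp h0)) (lt_irrefl 0)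
    · intro h0
      exact absurd (ν.parts_pos (Multiset.mem_sort (· ≥ ·) |>.mp h0)) (lt_irrefl 0)
  have hp : μ.parts = ν.parts := by
    have hμ := Multiset.sort_eq μ.parts (· ≥ ·)
    have hν := Multiset.sort_eq ν.parts (· ≥ ·)
    rw [← hμ, ← hν, hl]
  ext1
  rw [hp]

/-- Lemma 3.6: in an inner product space with orthonormal Schur vectors `s μ`
(`μ ⊢ N`) and generators `v B` that are dominance-triangular with respect to
`φ B` with nonnegative coefficients, separation of `A` from above implies full
separation. -/
theorem separation_from_above (N : ℕ) (V : Type*) [NormedAddCommGroup V]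
    [InnerProductSpace ℝ V] (s : N.Partition → V) (hs : Orthonormal ℝ s)
    (ι : Type*) [Fintype ι] (v : ι → V) (φ : ι → N.Partition)
    (htri : ∀ (μ : N.Partition) (B : ι), ¬ Dominates μ (φ B) → ⟪s μ, v B⟫ = 0)
    (hdiag : ∀ B : ι, ⟪s (φ B), v B⟫ = 1)
    (hnonneg : ∀ (μ : N.Partition) (B : ι), 0 ≤ ⟪s μ, v B⟫)
    (A : ι) (f : V)
    (hsupp : ∃ a : N.Partition → ℝ,
      f = ∑ μ : N.Partition, a μ • s μ ∧ ∀ μ, a μ ≠ 0 → Dominates μ (φ A))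
    (hfA : 0 < ⟪f, v A⟫)
    (hfB : ∀ B : ι, B ≠ A → Dominates (φ B) (φ A) → ⟪f, v B⟫ ≤ 0) :
    ∃ g : V, 0 < ⟪g, v A⟫ ∧ ∀ B : ι, B ≠ A → ⟪g, v B⟫ ≤ 0 := by
  classical
  -- the partial order given by dominance
  letI : PartialOrder N.Partition :=
    { le := fun a b => Dominates b a
      le_refl := fun a => Dominates.refl a
      le_trans := fun a b c hab hbc => Dominates.trans hbc hab
      le_antisymm := fun a b hab hba => Dominates.antisymm hba hab }
  have key : ∀ (n : ℕ) (I : Finset N.Partition), Iᶜ.card ≤ n →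
      (∀ κ ν, κ ∈ I → Dominates ν κ → ν ∈ I) → φ A ∈ I →
      ∀ g : V, 0 < ⟪g, v A⟫ → (∀ B, B ≠ A → φ B ∈ I → ⟪g, v B⟫ ≤ 0) →
      ∃ g' : V, 0 < ⟪g', v A⟫ ∧ ∀ B, B ≠ A → ⟪g', v B⟫ ≤ 0 := by
    intro n
    induction n with
    | zero =>
      intro I hcard _ _ g hgA hgB
      have : Iᶜ = ∅ := Finset.card_eq_zero.mp (Nat.le_zero.mp hcard)
      have hIuniv : I = Finset.univ := by
        rw [← compl_compl I, this, Finset.compl_empty]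
      exact ⟨g, hgA, fun B hB => hgB B hB (hIuniv ▸ Finset.mem_univ _)⟩
    | succ n ih =>
      intro I hcard hup hAI g hgA hgB
      by_cases hne : Iᶜ.Nonempty
      · -- pick a maximal element of the complement
        obtain ⟨μ, hμc, hμmax0⟩ := Iᶜ.exists_maximal hne
        have hμmax : ∀ x' ∈ Iᶜ, ¬ μ < x' := fun x hx hlt => hlt.not_ge (hμmax0 hx hlt.le)
        have hμI : μ ∉ I := Finset.mem_compl.mp hμc
        -- constants
        set c : ℝ := ∑ B : ι, max 0 ⟪g, v B⟫ with hc
        have hc0 : 0 ≤ c := Finset.sum_nonneg fun B _ => le_max_left _ _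
        have hcB : ∀ B : ι, ⟪g, v B⟫ ≤ c := fun B =>
          le_trans (le_max_right _ _)
            (Finset.single_le_sum (f := fun B => max 0 ⟪g, v B⟫)
              (fun B _ => le_max_left _ _) (Finset.mem_univ B))
        -- μ does not dominate φ A
        have hμA : ¬ Dominates μ (φ A) := fun h => hμI (hup _ _ hAI h)
        have hsA : ⟪s μ, v A⟫ = 0 := htri μ A hμA
        set g' : V := g - c • s μ with hg'
        have hinner : ∀ B : ι, ⟪g', v B⟫ = ⟪g, v B⟫ - c * ⟪s μ, v B⟫ := by
          intro B
          rw [hg', inner_sub_left, real_inner_smul_left]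
        -- I ∪ {μ} is upward closed
        have hup' : ∀ κ ν, κ ∈ insert μ I → Dominates ν κ → ν ∈ insert μ I := by
          intro κ ν hκ hdom
          rcases Finset.mem_insert.mp hκ with h | h
          · by_cases hνI : ν ∈ I
            · exact Finset.mem_insert_of_mem hνI
            · by_cases hνμ : ν = μ
              · exact Finset.mem_insert.mpr (Or.inl hνμ)
              · exfalso
                refine hμmax ν (Finset.mem_compl.mpr hνI) ?_
                refine lt_iff_le_and_ne.mpr ⟨h ▸ hdom, ?_⟩
                exact fun h2 => hνμ h2.symm
          · exact Finset.mem_insert_of_mem (hup _ _ h hdom)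
        have hcard' : (insert μ I)ᶜ.card ≤ n := by
          rw [Finset.compl_insert]
          have := Finset.card_erase_of_mem hμc
          omega
        refine ih (insert μ I) hcard' hup' (Finset.mem_insert_of_mem hAI) g' ?_ ?_
        · rw [hinner, hsA, mul_zero, sub_zero]; exact hgA
        · intro B hB hBmem
          rcases Finset.mem_insert.mp hBmem with h | h
          · -- φ B = μ
            rw [hinner, ← h, hdiag B, mul_one, sub_nonpos]
            exact hcB B
          · rw [hinner, sub_nonpos]
            calc ⟪g, v B⟫ ≤ 0 := hgB B hB h
              _ ≤ c * ⟪s μ, v B⟫ := mul_nonneg hc0 (hnonneg μ B)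
      · -- complement empty: done
        rw [Finset.not_nonempty_iff_eq_empty] at hne
        have hIuniv : I = Finset.univ := by
          rw [← compl_compl I, hne, Finset.compl_empty]
        exact ⟨g, hgA, fun B hB => hgB B hB (hIuniv ▸ Finset.mem_univ _)⟩
  -- initialize with I = {ν | ν ⊵ φ A}
  refine key (Finset.univ.filter (fun ν => Dominates ν (φ A)))ᶜ.card
    (Finset.univ.filter (fun ν => Dominates ν (φ A))) le_rfl ?_ ?_ f hfA ?_
  · intro κ ν hκ hdom
    rw [Finset.mem_filter] at hκ ⊢
    exact ⟨Finset.mem_univ _, Dominates.trans hdom hκ.2⟩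
  · exact Finset.mem_filter.mpr ⟨Finset.mem_univ _, Dominates.refl _⟩
  · intro B hB hBmem
    exact hfB B hB (Finset.mem_filter.mp hBmem).2
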